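/- There exists a finite simple bipartite graph G with parts A and B, with |A| = 10 and |B| = 15, in which every vertex of A has degree 3 and every vertex of B has degree 2, such that every set S ⊆ B with |S| ≤ 5 for which the bipartite subgraph induced on A ∪ (B \ S) contains a matching saturating A satisfies |N(S)| ≤ 9 = (9/10)·|A|. -/

import Mathlib

def myEdges : List (Nat × Nat) :=
  [(0,10),(3,10),(0,11),(6,11),(0,12),(9,12),
   (1,13),(2,13),(1,14),(2,14),(1,15),(3,15),(2,16),(3,16),
   (4,17),(5,17),(4,18),(5,18),(4,19),(6,19),(5,20),(6,20),
   (7,21),(8,21),(7,22),(8,22),(7,23),(9,23),(8,24),(9,24)]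

def myAdj (v w : Fin 25) : Bool :=
  myEdges.contains (v.val, w.val) || myEdges.contains (w.val, v.val)

lemma myAdj_symm : ∀ v w : Fin 25, myAdj v w = myAdj w v := by decide
lemma myAdj_irrefl : ∀ v : Fin 25, myAdj v v = false := by decide

def myG : SimpleGraph (Fin 25) where
  Adj v w := myAdj v w = true
  symm := ⟨fun v w h => by
    have h' : myAdj v w = true := h
    show myAdj w v = true
    rw [← myAdj_symm]; exact h'⟩
  loopless := ⟨fun v h => by
    have h' : myAdj v v = true := h
    rw [myAdj_irrefl] at h'; exact Bool.false_ne_true h'⟩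

instance : DecidableRel myG.Adj := fun v w =>
  inferInstanceAs (Decidable (myAdj v w = true))

def myA : Finset (Fin 25) := Finset.univ.filter (fun v => v.val < 10)
def myB : Finset (Fin 25) := Finset.univ.filter (fun v => 10 ≤ v.val)

def F1 : Finset (Fin 25) := {10,13,14,15,16}
def F2 : Finset (Fin 25) := {11,17,18,19,20}
def F3 : Finset (Fin 25) := {12,21,22,23,24}

-- neighbor candidate lemmas
lemma memF1 : ∀ b : Fin 25, (myAdj 1 b || myAdj 2 b || myAdj 3 b) = true → b ∈ F1 := by decide
lemma memF2 : ∀ b : Fin 25, (myAdj 4 b || myAdj 5 b || myAdj 6 b) = true → b ∈ F2 := by decide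
lemma memF3 : ∀ b : Fin 25, (myAdj 7 b || myAdj 8 b || myAdj 9 b) = true → b ∈ F3 := by decide

lemma uniq1 : ∀ b : Fin 25, myAdj 1 b = true → myAdj 3 b = true → b = 15 := by decide
lemma sep1 : ∀ b : Fin 25, myAdj 2 b = true → b ≠ 15 := by decide
lemma uniq2 : ∀ b : Fin 25, myAdj 4 b = true → myAdj 6 b = true → b = 19 := by decide
lemma sep2 : ∀ b : Fin 25, myAdj 5 b = true → b ≠ 19 := by decide
lemma uniq3 : ∀ b : Fin 25, myAdj 7 b = true → myAdj 9 b = true → b = 23 := by decide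
lemma sep3 : ∀ b : Fin 25, myAdj 8 b = true → b ≠ 23 := by decide

lemma two_le_inter {S F : Finset (Fin 25)} {x y : Fin 25}
    (hx : x ∈ S ∩ F) (hy : y ∈ S ∩ F) (hxy : x ≠ y) : 2 ≤ (S ∩ F).card :=
  Finset.one_lt_card.2 ⟨x, hx, y, hy, hxy⟩


theorem key (S : Finset (Fin 25)) (hcard : S.card ≤ 5)
    (hcov : ∀ a ∈ myA, ∃ b ∈ S, myG.Adj a b) : False := by
  -- witnesses for gadget 1
  obtain ⟨b1, hb1S, hb1⟩ := hcov 1 (by decide)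
  obtain ⟨b2, hb2S, hb2⟩ := hcov 2 (by decide)
  obtain ⟨b3, hb3S, hb3⟩ := hcov 3 (by decide)
  obtain ⟨b4, hb4S, hb4⟩ := hcov 4 (by decide)
  obtain ⟨b5, hb5S, hb5⟩ := hcov 5 (by decide)
  obtain ⟨b6, hb6S, hb6⟩ := hcov 6 (by decide)
  obtain ⟨b7, hb7S, hb7⟩ := hcov 7 (by decide)
  obtain ⟨b8, hb8S, hb8⟩ := hcov 8 (by decide)
  obtain ⟨b9, hb9S, hb9⟩ := hcov 9 (by decide)
  replace hb1 : myAdj 1 b1 = true := hb1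
  replace hb2 : myAdj 2 b2 = true := hb2
  replace hb3 : myAdj 3 b3 = true := hb3
  replace hb4 : myAdj 4 b4 = true := hb4
  replace hb5 : myAdj 5 b5 = true := hb5
  replace hb6 : myAdj 6 b6 = true := hb6
  replace hb7 : myAdj 7 b7 = true := hb7
  replace hb8 : myAdj 8 b8 = true := hb8
  replace hb9 : myAdj 9 b9 = true := hb9
  have h1 : 2 ≤ (S ∩ F1).card := by
    have m1 : b1 ∈ S ∩ F1 := Finset.mem_inter.2 ⟨hb1S, memF1 b1 (by simp [hb1])⟩
    have m2 : b2 ∈ S ∩ F1 := Finset.mem_inter.2 ⟨hb2S, memF1 b2 (by simp [hb2])⟩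
    have m3 : b3 ∈ S ∩ F1 := Finset.mem_inter.2 ⟨hb3S, memF1 b3 (by simp [hb3])⟩
    by_cases h13 : b1 = b3
    · have : b1 = 15 := uniq1 b1 hb1 (h13 ▸ hb3)
      exact two_le_inter m1 m2 (fun he => sep1 b2 hb2 (he ▸ this))
    · exact two_le_inter m1 m3 h13
  have h2 : 2 ≤ (S ∩ F2).card := by
    have m1 : b4 ∈ S ∩ F2 := Finset.mem_inter.2 ⟨hb4S, memF2 b4 (by simp [hb4])⟩
    have m2 : b5 ∈ S ∩ F2 := Finset.mem_inter.2 ⟨hb5S, memF2 b5 (by simp [hb5])⟩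
    have m3 : b6 ∈ S ∩ F2 := Finset.mem_inter.2 ⟨hb6S, memF2 b6 (by simp [hb6])⟩
    by_cases h13 : b4 = b6
    · have : b4 = 19 := uniq2 b4 hb4 (h13 ▸ hb6)
      exact two_le_inter m1 m2 (fun he => sep2 b5 hb5 (he ▸ this))
    · exact two_le_inter m1 m3 h13
  have h3 : 2 ≤ (S ∩ F3).card := by
    have m1 : b7 ∈ S ∩ F3 := Finset.mem_inter.2 ⟨hb7S, memF3 b7 (by simp [hb7])⟩
    have m2 : b8 ∈ S ∩ F3 := Finset.mem_inter.2 ⟨hb8S, memF3 b8 (by simp [hb8])⟩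
    have m3 : b9 ∈ S ∩ F3 := Finset.mem_inter.2 ⟨hb9S, memF3 b9 (by simp [hb9])⟩
    by_cases h13 : b7 = b9
    · have : b7 = 23 := uniq3 b7 hb7 (h13 ▸ hb9)
      exact two_le_inter m1 m2 (fun he => sep3 b8 hb8 (he ▸ this))
    · exact two_le_inter m1 m3 h13
  have d12 : Disjoint F1 F2 := by decide
  have d13 : Disjoint F1 F3 := by decide
  have d23 : Disjoint F2 F3 := by decide
  have dS12 : Disjoint (S ∩ F1) (S ∩ F2) :=
    d12.mono Finset.inter_subset_right Finset.inter_subset_right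
  have dS13 : Disjoint (S ∩ F1 ∪ S ∩ F2) (S ∩ F3) :=
    Finset.disjoint_union_left.2
      ⟨d13.mono Finset.inter_subset_right Finset.inter_subset_right,
       d23.mono Finset.inter_subset_right Finset.inter_subset_right⟩
  have hsub : (S ∩ F1 ∪ S ∩ F2) ∪ S ∩ F3 ⊆ S := by
    intro x hx
    rcases Finset.mem_union.1 hx with hx | hx
    · rcases Finset.mem_union.1 hx with hx | hx
      · exact (Finset.mem_inter.1 hx).1
      · exact (Finset.mem_inter.1 hx).1
    · exact (Finset.mem_inter.1 hx).1
  have : 6 ≤ S.card := by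
    calc 6 ≤ ((S ∩ F1).card + (S ∩ F2).card) + (S ∩ F3).card := by omega
    _ = ((S ∩ F1 ∪ S ∩ F2) ∪ S ∩ F3).card := by
        rw [Finset.card_union_of_disjoint dS13, Finset.card_union_of_disjoint dS12]
    _ ≤ S.card := Finset.card_le_card hsub
  omega

/-- There is a finite simple bipartite graph with parts of sizes `|A| = 10` and
`|B| = 15`, all degrees 3 on `A` and 2 on `B`, in which every feasible 2PPM solution
`S` (i.e. `|S| ≤ 5` and the induced subgraph on `A ∪ (B \ S)` has an `A`-saturating
matching) satisfies `|N(S)| ≤ 9 = (9/10)·|A|`. -/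
theorem stmt_10 :
    ∃ (V : Type) (_ : Finite V) (G : SimpleGraph V) (A B : Finset V),
      Disjoint A B ∧
      (∀ v w, G.Adj v w → (v ∈ A ∧ w ∈ B) ∨ (v ∈ B ∧ w ∈ A)) ∧
      A.card = 10 ∧ B.card = 15 ∧
      (∀ a ∈ A, (G.neighborSet a).ncard = 3) ∧
      (∀ b ∈ B, (G.neighborSet b).ncard = 2) ∧
      (∀ S ⊆ B, S.card ≤ 5 →
        (∃ f : V → V, Set.InjOn f ↑A ∧
          ∀ a ∈ A, f a ∈ B ∧ f a ∉ S ∧ G.Adj a (f a)) →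
        {a : V | a ∈ A ∧ ∃ b ∈ S, G.Adj a b}.ncard ≤ 9) := by
  refine ⟨Fin 25, Finite.of_fintype _, myG, myA, myB, ?_, ?_, ?_, ?_, ?_, ?_, ?_⟩
  · decide
  · decide
  · decide
  · decide
  · intro a ha
    rw [Set.ncard_eq_toFinset_card']
    revert ha; revert a; decide
  · intro b hb
    rw [Set.ncard_eq_toFinset_card']
    revert hb; revert b; decide
  · intro S hSB hScard _
    have hset : {a : Fin 25 | a ∈ myA ∧ ∃ b ∈ S, myG.Adj a b}
        = ↑(myA.filter (fun a => ∃ b ∈ S, myG.Adj a b)) := by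
      ext a; simp [Finset.mem_filter]
    rw [hset, Set.ncard_coe_finset]
    by_contra hcon
    push_neg at hcon
    have hle : (myA.filter (fun a => ∃ b ∈ S, myG.Adj a b)).card ≤ myA.card :=
      Finset.card_le_card (Finset.filter_subset _ _)
    have hAcard : myA.card = 10 := by decide
    have heq : myA.filter (fun a => ∃ b ∈ S, myG.Adj a b) = myA :=
      Finset.eq_of_subset_of_card_le (Finset.filter_subset _ _) (by omega)
    have hcov : ∀ a ∈ myA, ∃ b ∈ S, myG.Adj a b := by
      intro a ha
      have : a ∈ myA.filter (fun a => ∃ b ∈ S, myG.Adj a b) := by rw [heq]; exact ha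
      exact (Finset.mem_filter.1 this).2
    exact key S hScard hcov
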